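/- Let l > 0 and let λ₀ > 0 satisfy E(λ₀, l) = 0. Then the derivative of λ ↦ E(λ, l) at λ₀ equals (G₀·c_B/(2√λ₀))·((l + 1)/(√λ₀·(√λ₀ + 1)²) − (l + √(1 + l²))/(√(λ₀ + l²)·(√(λ₀ + l²) + √(1 + l²))²)), and this value is strictly positive. -/

import Mathlib

lemma claim1 (l s u m : ℝ) (hl : 0<l) (hs : 0<s) (hu : 0<u) (hm : 1 < m)
    (hsl : l < s) (hus : s < u) (hml : l < m) (hm2 : m^2 = 1+l^2) (hu2 : u^2 = s^2+l^2) :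
    l*(u+s)*(u+m)^2 ≤ u*(1+l)*(u+s+m+1)^2 := by
  have hm0 : (0:ℝ) < m := by linarith
  have hexp : u*(1+l)*(u+s+m+1)^2 - l*(u+s)*(u+m)^2 =
      -((u+m)*((u+m)*(l*s-u))) + (u+m)*(2*u*(1+l)*(s+1)) + u*((1+l)*(s+1)^2) := by ring
  have hpos2 : 0 < u*((1+l)*(s+1)^2) :=
    mul_pos hu (mul_pos (by linarith) (by positivity))
  rcases le_or_gt (l*s) u with h | h
  · have h1 : 0 ≤ (u+m)*((u+m)*(u-l*s)) := by
      have := sub_nonneg.mpr h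
      positivity
    have h2 : 0 ≤ (u+m)*(2*u*(1+l)*(s+1)) := by positivity
    linarith [h1, h2, hpos2, hexp]
  · have hul : l < u := by nlinarith
    have hml1 : m < 1 + l := by nlinarith
    have hl1 : 1 < l := by nlinarith
    have hA : (u+m)*(l*s-u) ≤ (u+1+l)*(s*(l-1)) :=
      mul_le_mul (by linarith) (by linarith) (by linarith) (by linarith)
    have hlu : l^2 < u*l := by linarith [mul_lt_mul_of_pos_right hul hl]
    have hB1 : (u+1+l)*(l-1) ≤ 2*u*l := by linarith [hlu]
    have hB2 := mul_le_mul_of_nonneg_right hB1 hs.le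
    have hC : 2*u*l*s ≤ 2*u*(1+l)*(s+1) := by
      linarith [mul_pos hu (show (0:ℝ) < s+1+l by linarith)]
    have h1 : (u+m)*(l*s-u) ≤ 2*u*(1+l)*(s+1) := by linarith [hA, hB2, hC]
    have h2 := mul_le_mul_of_nonneg_left h1 (by positivity : (0:ℝ) ≤ u+m)
    linarith [h2, hpos2, hexp]

set_option maxHeartbeats 1000000 in
lemma keyX (l s u m : ℝ) (hl : 0<l) (hs : 0<s) (hu : 0<u) (hm : 1 < m)
    (hsl : l < s) (hus : s < u) (hml : l < m) (hm2 : m^2 = 1+l^2) (hu2 : u^2 = s^2+l^2)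
    (hlin : u*(1+l) = s*(m+l) - l*(m-1)) :
    (l+m)*s*(s+1)^2 < (l+1)*u*(u+m)^2 := by
  have hK : 0 < u+s+m+1 := by linarith
  have claim := claim1 l s u m hl hs hu hm hsl hus hml hm2 hu2
  have hY : l*(u+s)*(u+m)^2 < s*(l+m)*(u+s+m+1)^2 := by
    have he : s*(l+m)*(u+s+m+1)^2 = u*(1+l)*(u+s+m+1)^2 + l*(m-1)*(u+s+m+1)^2 := by
      linear_combination (-(u+s+m+1)^2) * hlin
    linarith [claim, he, mul_pos (mul_pos hl (by linarith : (0:ℝ) < m-1)) (pow_pos hK 2)]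
  have hid : ((l+1)*u*(u+m)^2 - (l+m)*s*(s+1)^2)*((u+s)*(m+1)) =
      l^2 * (s*(l+m)*(u+s+m+1)^2 - l*(u+s)*(u+m)^2) := by
    linear_combination ((u+m)^2*(u+s)*(m+1)) * hlin +
      (s*(m+l)*(u+s+m+1)*(m+1)) * hu2 +
      (s*(m+l)*(u+s+m+1)*(u+s) - l*(u+m)^2*(u+s)) * hm2
  have hpos : 0 < ((l+1)*u*(u+m)^2 - (l+m)*s*(s+1)^2)*((u+s)*(m+1)) := by
    rw [hid]; exact mul_pos (pow_pos hl 2) (by linarith)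
  have h2 : 0 < (u+s)*(m+1) := by positivity
  have h3 := div_pos hpos h2
  rw [mul_div_assoc, div_self h2.ne', mul_one] at h3
  linarith


/-- The boundary evolution function `E(λ, l)` for the Hele-Shaw tumor growth model. -/
noncomputable def E (G0 cB lam l : ℝ) : ℝ :=
  (G0 * cB / Real.sqrt lam) *
    ((Real.sqrt lam - l) / (Real.sqrt lam + 1) +
      (l - Real.sqrt (lam + l ^ 2)) / (Real.sqrt (lam + l ^ 2) + Real.sqrt (1 + l ^ 2)))

set_option maxHeartbeats 1000000 in
theorem stmt_8 (G0 cB l lam0 : ℝ) (hG0 : 0 < G0) (hcB : 0 < cB) (hl : 0 < l)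
    (hlam0 : 0 < lam0) (hzero : E G0 cB lam0 l = 0) :
    HasDerivAt (fun t : ℝ => E G0 cB t l)
      ((G0 * cB / (2 * Real.sqrt lam0)) *
        ((l + 1) / (Real.sqrt lam0 * (Real.sqrt lam0 + 1) ^ 2) -
          (l + Real.sqrt (1 + l ^ 2)) /
            (Real.sqrt (lam0 + l ^ 2) *
              (Real.sqrt (lam0 + l ^ 2) + Real.sqrt (1 + l ^ 2)) ^ 2)))
      lam0 ∧
    0 < (G0 * cB / (2 * Real.sqrt lam0)) *
        ((l + 1) / (Real.sqrt lam0 * (Real.sqrt lam0 + 1) ^ 2) -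
          (l + Real.sqrt (1 + l ^ 2)) /
            (Real.sqrt (lam0 + l ^ 2) *
              (Real.sqrt (lam0 + l ^ 2) + Real.sqrt (1 + l ^ 2)) ^ 2)) := by
  set s := Real.sqrt lam0 with hs_def
  set u := Real.sqrt (lam0 + l ^ 2) with hu_def
  set m := Real.sqrt (1 + l ^ 2) with hm_def
  have hs : 0 < s := Real.sqrt_pos.mpr hlam0
  have hu : 0 < u := Real.sqrt_pos.mpr (by positivity)
  have hm0 : 0 < m := Real.sqrt_pos.mpr (by positivity)
  have hs2 : s ^ 2 = lam0 := Real.sq_sqrt hlam0.le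
  have hu2' : u ^ 2 = lam0 + l ^ 2 := Real.sq_sqrt (by positivity)
  have hm2 : m ^ 2 = 1 + l ^ 2 := Real.sq_sqrt (by positivity)
  have hu2 : u ^ 2 = s ^ 2 + l ^ 2 := by rw [hu2', hs2]
  have hm : 1 < m := by nlinarith
  have hus : s < u := by nlinarith
  have hml : l < m := by nlinarith
  have hs1 : s + 1 ≠ 0 := by positivity
  have hum : u + m ≠ 0 := by positivity
  have hsne : s ≠ 0 := hs.ne'
  have hune : u ≠ 0 := hu.ne'
  -- zero condition
  have hS0 : (s - l) / (s + 1) + (l - u) / (u + m) = 0 := by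
    have hc : G0 * cB / s ≠ 0 := by positivity
    have := hzero
    rw [E] at this
    rcases mul_eq_zero.mp this with h | h
    · exact absurd h hc
    · exact h
  have hz : (s - l) * (u + m) = (u - l) * (s + 1) := by
    field_simp at hS0
    linarith [hS0]
  have hsl : l < s := by
    by_contra h
    push_neg at h
    have hul : l < u := by nlinarith
    nlinarith [mul_pos (show (0:ℝ) < u - l by linarith) (show (0:ℝ) < s + 1 by linarith),
      mul_nonneg (show (0:ℝ) ≤ l - s by linarith) (show (0:ℝ) ≤ u + m by positivity)]
  have hlin : u * (1 + l) = s * (m + l) - l * (m - 1) := by linear_combination -hz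
  -- derivatives
  have hds : HasDerivAt Real.sqrt (1 / (2 * s)) lam0 := Real.hasDerivAt_sqrt hlam0.ne'
  have hdq : HasDerivAt (fun t : ℝ => Real.sqrt (t + l ^ 2)) (1 / (2 * u)) lam0 := by
    have h1 : HasDerivAt (fun t : ℝ => t + l ^ 2) 1 lam0 := (hasDerivAt_id lam0).add_const _
    have := h1.sqrt (by positivity : lam0 + l ^ 2 ≠ 0)
    simpa using this
  have hA : HasDerivAt (fun t : ℝ => (Real.sqrt t - l) / (Real.sqrt t + 1))
      ((1 / (2 * s) * (s + 1) - (s - l) * (1 / (2 * s))) / (s + 1) ^ 2) lam0 :=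
    (hds.sub_const l).div (hds.add_const 1) hs1
  have hB : HasDerivAt (fun t : ℝ => (l - Real.sqrt (t + l ^ 2)) / (Real.sqrt (t + l ^ 2) + m))
      (((0 - 1 / (2 * u)) * (u + m) - (l - u) * (1 / (2 * u))) / (u + m) ^ 2) lam0 :=
    ((hasDerivAt_const lam0 l).sub hdq).div (hdq.add_const m) hum
  have hC : HasDerivAt (fun t : ℝ => G0 * cB / Real.sqrt t)
      ((0 * s - G0 * cB * (1 / (2 * s))) / s ^ 2) lam0 :=
    (hasDerivAt_const lam0 (G0 * cB)).div hds hsne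
  have hD := hC.mul (hA.add hB)
  have hEq : (G0 * cB / (2 * s)) *
      ((l + 1) / (s * (s + 1) ^ 2) - (l + m) / (u * (u + m) ^ 2)) =
      (0 * s - G0 * cB * (1 / (2 * s))) / s ^ 2 * ((s - l) / (s + 1) + (l - u) / (u + m)) +
      G0 * cB / s *
        ((1 / (2 * s) * (s + 1) - (s - l) * (1 / (2 * s))) / (s + 1) ^ 2 +
          ((0 - 1 / (2 * u)) * (u + m) - (l - u) * (1 / (2 * u))) / (u + m) ^ 2) := by
    rw [hS0]
    field_simp
    ring
  constructor
  · simp only [E]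
    rw [hEq]
    exact hD
  · have hX := keyX l s u m hl hs hu hm hsl hus hml hm2 hu2 hlin
    have h1 : 0 < (l + 1) / (s * (s + 1) ^ 2) - (l + m) / (u * (u + m) ^ 2) := by
      rw [div_sub_div _ _ (by positivity) (by positivity)]
      apply div_pos
      · linarith [hX]
      · positivity
    have h2 : 0 < G0 * cB / (2 * s) := by positivity
    exact mul_pos h2 h1
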